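/- Let K be a valued field of characteristic 0 and finite residue characteristic p, let A ⊂ K be finite, and choose ℓ with |A| < p^ℓ; set λ = |p^ℓ|. For a ∈ A define D_a = {rv_λ(a − v) : v ∈ A}. Then for all a, a' ∈ A, a = a' if and only if D_a = D_{a'}. -/

import Mathlib

/-- `rveq v lam x y` expresses `rv_lam x = rv_lam y` in the leading-term structure
`RV_lam = K^× / B_{<lam}(1) ∪ {0}`: for `x ≠ 0` it means `v (x - y) < lam * v x`,
and `rv_lam 0 = 0` is only equal to `rv_lam y` for `y = 0`. -/
def rveq {K : Type*} [Field K] {Γ₀ : Type*} [LinearOrderedCommGroupWithZero Γ₀]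
    (v : Valuation K Γ₀) (lam : Γ₀) (x y : K) : Prop :=
  v (x - y) < lam * v x ∨ (x = 0 ∧ y = 0)

section aux
variable {K : Type*} [Field K] [CharZero K] {Γ₀ : Type*}
    [LinearOrderedCommGroupWithZero Γ₀] (v : Valuation K Γ₀)

lemma aux_nat_le_one (n : ℕ) : v (n : K) ≤ 1 := by
  induction n with
  | zero => simp
  | succ k ih => push_cast; exact le_trans (v.map_add _ _) (max_le ih (by simp))

lemma aux_int_le_one (z : ℤ) : v (z : K) ≤ 1 := by
  rcases Int.natAbs_eq z with h | h <;> rw [h]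
  · rw [Int.cast_natCast]; exact aux_nat_le_one v z.natAbs
  · rw [Int.cast_neg, Valuation.map_neg, Int.cast_natCast]
    exact aux_nat_le_one v z.natAbs

lemma aux_coprime (p : ℕ) (hp : p.Prime) (hvp : v (p : K) < 1)
    (m : ℕ) (hm : Nat.Coprime m p) : v (m : K) = 1 := by
  refine le_antisymm (aux_nat_le_one v m) ?_
  by_contra h
  push_neg at h
  have hbz : ((1 : ℕ) : ℤ) = (m : ℤ) * Nat.gcdA m p + (p : ℤ) * Nat.gcdB m p := by
    rw [← hm]; exact Nat.gcd_eq_gcd_ab m p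
  have hK : (1 : K) = (m : K) * ((Nat.gcdA m p : ℤ) : K) + (p : K) * ((Nat.gcdB m p : ℤ) : K) := by
    exact_mod_cast congrArg (fun z : ℤ => (z : K)) hbz
  have h1 : (1 : Γ₀) = v ((m : K) * ((Nat.gcdA m p : ℤ) : K) + (p : K) * ((Nat.gcdB m p : ℤ) : K)) := by
    rw [← hK, v.map_one]
  have hle := v.map_add ((m : K) * ((Nat.gcdA m p : ℤ) : K)) ((p : K) * ((Nat.gcdB m p : ℤ) : K))
  rw [← h1] at hle
  have hma : v ((m : K) * ((Nat.gcdA m p : ℤ) : K)) < 1 := by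
    rw [v.map_mul]
    calc v (m:K) * v ((Nat.gcdA m p : ℤ) : K) ≤ v (m:K) * 1 :=
          mul_le_mul_right (aux_int_le_one v _) _
      _ = v (m:K) := mul_one _
      _ < 1 := h
  have hpb : v ((p : K) * ((Nat.gcdB m p : ℤ) : K)) < 1 := by
    rw [v.map_mul]
    calc v (p:K) * v ((Nat.gcdB m p : ℤ) : K) ≤ v (p:K) * 1 :=
          mul_le_mul_right (aux_int_le_one v _) _
      _ = v (p:K) := mul_one _
      _ < 1 := hvp
  exact absurd hle (not_le.mpr (max_lt hma hpb))

lemma aux_lower (p : ℕ) (hp : p.Prime) (hvp : v (p : K) < 1) (ℓ : ℕ)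
    (m : ℕ) (hm : 0 < m) (hmlt : m < p ^ ℓ) : v (p : K) ^ ℓ < v (m : K) := by
  have hp0 : (p : K) ≠ 0 := Nat.cast_ne_zero.mpr hp.pos.ne'
  have hvp0 : (0 : Γ₀) < v (p : K) := zero_lt_iff.mpr ((Valuation.ne_zero_iff v).mpr hp0)
  set k := m.factorization p with hk
  have hsplit : p ^ k * (m / p ^ k) = m := Nat.ordProj_mul_ordCompl_eq_self m p
  have hcop : Nat.Coprime (m / p ^ k) p := (Nat.coprime_ordCompl hp hm.ne').symm
  have hklt : k < ℓ := by
    have h1 : p ^ k ≤ m := Nat.ordProj_le p hm.ne'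
    exact (Nat.pow_lt_pow_iff_right hp.one_lt).mp (lt_of_le_of_lt h1 hmlt)
  have hvm : v (m : K) = v (p : K) ^ k := by
    rw [← hsplit]
    push_cast
    rw [v.map_mul, v.map_pow, aux_coprime v p hp hvp _ hcop, mul_one]
  rw [hvm]
  exact pow_lt_pow_right_of_lt_one₀ hvp0 hvp hklt
end aux

theorem stmt5 {K : Type*} [Field K] [CharZero K] {Γ₀ : Type*}
    [LinearOrderedCommGroupWithZero Γ₀]
    (v : Valuation K Γ₀) (p : ℕ) (hp : p.Prime) (hvp : v (p : K) < 1)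
    (A : Finset K) (ℓ : ℕ) (hcard : A.card < p ^ ℓ) :
    ∀ a ∈ A, ∀ a' ∈ A,
      (a = a' ↔
        ((∀ u ∈ A, ∃ u' ∈ A, rveq v ((v (p : K)) ^ ℓ) (a - u) (a' - u')) ∧
         (∀ u' ∈ A, ∃ u ∈ A, rveq v ((v (p : K)) ^ ℓ) (a' - u') (a - u)))) := by
  have hp0 : (p : K) ≠ 0 := Nat.cast_ne_zero.mpr hp.pos.ne'
  have hvp0 : v (p : K) ≠ 0 := (Valuation.ne_zero_iff v).mpr hp0
  set lam := v (p : K) ^ ℓ with hlamdef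
  have hlam0 : lam ≠ 0 := pow_ne_zero _ hvp0
  have hlam1 : lam ≤ 1 := pow_le_one' hvp.le ℓ
  intro a ha a' ha'
  constructor
  · rintro rfl
    have hrefl : ∀ u : K, rveq v lam (a - u) (a - u) := by
      intro u
      by_cases h : a - u = 0
      · exact Or.inr ⟨h, h⟩
      · refine Or.inl ?_
        rw [sub_self, v.map_zero]
        exact zero_lt_iff.mpr (mul_ne_zero hlam0 ((Valuation.ne_zero_iff v).mpr h))
    exact ⟨fun u hu => ⟨u, hu, hrefl u⟩, fun u hu => ⟨u, hu, hrefl u⟩⟩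
  · rintro ⟨h1, -⟩
    by_contra hne
    set d := a - a' with hddef
    have hd : d ≠ 0 := sub_ne_zero.mpr hne
    set δ := v d with hδdef
    have hδ : δ ≠ 0 := (Valuation.ne_zero_iff v).mpr hd
    have hlamδ : (0:Γ₀) < lam * δ := zero_lt_iff.mpr (mul_ne_zero hlam0 hδ)
    have ha'eq : a' = a - d := by rw [hddef]; ring
    -- choice function on the subtype
    have hg : ∀ x : {y : K // y ∈ A}, ∃ z : {y : K // y ∈ A},
        rveq v lam (a - (x : K)) (a' - (z : K)) := by
      intro x
      obtain ⟨u', hu', hr⟩ := h1 x x.2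
      exact ⟨⟨u', hu'⟩, hr⟩
    choose g hgr using hg
    set U : ℕ → {y : K // y ∈ A} := fun n => g^[n] ⟨a, ha⟩ with hUdef
    have hUsucc : ∀ n, U (n + 1) = g (U n) := fun n => Function.iterate_succ_apply' g n _
    have hU0 : (U 0 : K) = a := rfl
    -- the key invariant
    have key : ∀ n, n ≤ A.card → v (a - (U n : K) - (n : K) * d) < lam * δ := by
      intro n
      induction n with
      | zero => intro _; simpa [hU0] using hlamδ
      | succ k ih =>
        intro hk1
        have hk : k ≤ A.card := Nat.le_of_succ_le hk1
        have IH := ih hk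
        -- v (a - U k) ≤ δ
        have hva : v (a - (U k : K)) ≤ δ := by
          have heq : a - (U k : K) = (a - (U k : K) - (k : K) * d) + (k : K) * d := by ring
          rw [heq]
          refine le_trans (v.map_add _ _) (max_le ?_ ?_)
          · refine le_trans IH.le ?_
            calc lam * δ ≤ 1 * δ := mul_le_mul_left hlam1 δ
              _ = δ := one_mul δ
          · rw [v.map_mul]
            calc v ((k:K)) * v d ≤ 1 * v d := mul_le_mul_left (aux_nat_le_one v k) _
              _ = δ := one_mul δ
        rcases (hUsucc k ▸ hgr (U k)) with herr | ⟨hz1, hz2⟩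
        · -- main case
          have herr' : v ((a - (U k : K)) - (a' - (U (k+1) : K))) < lam * δ :=
            lt_of_lt_of_le herr (mul_le_mul_right hva lam)
          have heq : a - (U (k+1) : K) - ((k+1 : ℕ) : K) * d
              = (a - (U k : K) - (k : K) * d) - ((a - (U k : K)) - (a' - (U (k+1) : K))) := by
            rw [ha'eq]; push_cast; ring
          rw [heq]
          exact lt_of_le_of_lt (v.map_sub _ _) (max_lt IH herr')
        · -- degenerate case : a = U k, a' = U (k+1)
          have hUk : (U k : K) = a := (sub_eq_zero.mp hz1).symm
          have hUk1 : (U (k+1) : K) = a' := (sub_eq_zero.mp hz2).symm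
          rcases Nat.eq_zero_or_pos k with rfl | hkpos
          · rw [hUk1, ha'eq]
            push_cast
            simpa using hlamδ
          · exfalso
            rw [hUk, sub_self, zero_sub, Valuation.map_neg, v.map_mul] at IH
            have hkd : v ((k:K)) < lam := lt_of_mul_lt_mul_right IH zero_le'
            have := aux_lower v p hp hvp ℓ k hkpos (lt_of_le_of_lt hk hcard)
            exact absurd hkd (not_lt.mpr this.le)
    -- pigeonhole
    have hninj : ¬ Function.Injective (fun i : Fin (A.card + 1) => U (i : ℕ)) := by
      intro hinj
      have hc := Fintype.card_le_of_injective _ hinj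
      rw [Fintype.card_fin, Fintype.card_coe] at hc
      omega
    rw [Function.not_injective_iff] at hninj
    obtain ⟨i, j, hUij, hij⟩ := hninj
    -- wlog i < j
    wlog hlt : (j : ℕ) < (i : ℕ) generalizing i j
    · exact this j i hUij.symm hij.symm (by omega)
    have hki := key (i : ℕ) (Nat.lt_succ_iff.mp i.isLt)
    have hkj := key (j : ℕ) (Nat.lt_succ_iff.mp j.isLt)
    have hdiff : v (((i : ℕ) - (j : ℕ) : ℕ) * (d : K)) < lam * δ := by
      have hcast : ((((i:ℕ) - (j:ℕ) : ℕ) : K)) = ((i:ℕ) : K) - ((j:ℕ) : K) := by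
        rw [Nat.cast_sub hlt.le]
      have heq : (((i:ℕ) - (j:ℕ) : ℕ) : K) * d
          = (a - (U (j : ℕ) : K) - ((j:ℕ) : K) * d) - (a - (U (i : ℕ) : K) - ((i:ℕ) : K) * d) := by
        rw [hcast, hUij]; ring
      rw [heq]
      exact lt_of_le_of_lt (v.map_sub _ _) (max_lt hkj hki)
    rw [v.map_mul] at hdiff
    have h2 : v ((((i:ℕ) - (j:ℕ) : ℕ) : K)) < lam := lt_of_mul_lt_mul_right hdiff zero_le'
    have h3 := aux_lower v p hp hvp ℓ ((i:ℕ) - (j:ℕ)) (by omega)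
      (by have := Nat.lt_succ_iff.mp i.isLt; omega)
    exact absurd h2 (not_lt.mpr h3.le)
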